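/- Let φ(x) = x − g_0(x), where g_0 is defined by the backward recursion g_N(x) = f'(x)/(R + f''(x)), g_l(x) = (f'(x) + R·g_{l+1}(x))/(R + f''(x)). If f'(x*) = 0 and f''(x*) > 0 with R > 0, then φ'(x*) = (R/(R + f''(x*)))^{N+1}. -/

import Mathlib

/-- φ'(x*) = (R/(R + f''(x*)))^(N+1) for φ(x) = x − g_0(x). -/
theorem stmt2 (f : ℝ → ℝ) (hf : ContDiff ℝ 3 f) (R : ℝ) (hR : 0 < R) (N : ℕ)
    (g : ℕ → ℝ → ℝ)
    (hgN : ∀ x : ℝ, g N x = deriv f x / (R + deriv (deriv f) x))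
    (hrec : ∀ l < N, ∀ x : ℝ,
      g l x = (deriv f x + R * g (l + 1) x) / (R + deriv (deriv f) x))
    (xs : ℝ) (hxs : deriv f xs = 0) (hf2 : 0 < deriv (deriv f) xs) :
    deriv (fun x => x - g 0 x) xs = (R / (R + deriv (deriv f) xs)) ^ (N + 1) := by
  set d2 := deriv (deriv f) with hd2def
  set a : ℝ := R + d2 xs with hadef
  have ha : a ≠ 0 := by positivity
  -- differentiability
  have h3 : ContDiff ℝ (2 + 1 : WithTop ℕ∞) f := hf
  have hd1 : ContDiff ℝ (1 + 1 : WithTop ℕ∞) (deriv f) := (contDiff_succ_iff_deriv.mp h3).2.2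
  have hd2c : ContDiff ℝ (0 + 1 : WithTop ℕ∞) d2 := (contDiff_succ_iff_deriv.mp hd1).2.2
  have H1 : HasDerivAt (deriv f) (d2 xs) xs :=
    ((hd1.differentiable (by norm_num)) xs).hasDerivAt
  have H2 : HasDerivAt d2 (deriv d2 xs) xs :=
    ((hd2c.differentiable (by norm_num)) xs).hasDerivAt
  have Hden : HasDerivAt (fun x => R + d2 x) (deriv d2 xs) xs :=
    H2.const_add R
  have hden_ne : R + d2 xs ≠ 0 := ha
  -- main induction
  have key : ∀ k, k ≤ N →
      HasDerivAt (g (N - k)) (1 - (R / a) ^ (k + 1)) xs ∧ g (N - k) xs = 0 := by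
    intro k
    induction k with
    | zero =>
      intro _
      have hgNe : g N = fun x => deriv f x / (R + d2 x) := funext hgN
      simp only [Nat.sub_zero, hgNe]
      constructor
      · have : HasDerivAt (fun x => deriv f x / (R + d2 x)) _ xs := H1.div Hden hden_ne
        convert this using 1
        rw [hxs]
        have hda0 : d2 xs = a - R := by rw [hadef]; ring
        rw [← hadef, eq_div_iff (pow_ne_zero 2 ha), div_eq_mul_inv]
        linear_combination (-(R * a)) * (mul_inv_cancel₀ ha) + (-a) * hda0
      · rw [hxs]; simp
    | succ k ih =>
      intro hk
      have hk' : k ≤ N := Nat.le_of_succ_le hk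
      obtain ⟨ihd, ihv⟩ := ih hk'
      have hlt : N - (k + 1) < N := by omega
      have hsucc : N - (k + 1) + 1 = N - k := by omega
      have hge : g (N - (k + 1)) =
          fun x => (deriv f x + R * g (N - k) x) / (R + d2 x) := by
        funext x
        rw [hrec _ hlt x, hsucc]
      rw [hge]
      have Hnum : HasDerivAt (fun x => deriv f x + R * g (N - k) x)
          (d2 xs + R * (1 - (R / a) ^ (k + 1))) xs :=
        H1.add (ihd.const_mul R)
      constructor
      · have : HasDerivAt (fun x => (deriv f x + R * g (N - k) x) / (R + d2 x)) _ xs :=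
          Hnum.div Hden hden_ne
        convert this using 1
        rw [hxs, ihv]
        have hda : d2 xs = a - R := by rw [hadef]; ring
        rw [← hadef, eq_div_iff (pow_ne_zero 2 ha), div_eq_mul_inv]
        linear_combination (-(R * (R * a⁻¹) ^ (k + 1) * a)) * (mul_inv_cancel₀ ha) + (-a) * hda
      · simp [hxs, ihv]
  obtain ⟨hd0, _⟩ := key N le_rfl
  rw [Nat.sub_self] at hd0
  have : HasDerivAt (fun x => x - g 0 x) (1 - (1 - (R / a) ^ (N + 1))) xs :=
    (hasDerivAt_id xs).sub hd0
  rw [this.deriv]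
  ring
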